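/- arXiv:2506.06013 — 2 statements merged into one kernel-verified Lean document; each statement's English description precedes it below -/
import Mathlib

section
/- Projection of trap spaces from the perturbed encoding: let g be the perturbation-encoding network of f with perturbable set X, and let m be a trap space of g with m(v^k) ≠ ⋆ and m(v^o) ≠ ⋆ for all v ∈ X. Define the perturbation σ on X by σ(v) = 1 if m(v^k)=0 ∧ m(v^o)=1, σ(v) = 0 if m(v^k)=1 ∧ m(v^o)=0, σ(v) = ⋆ if m(v^k)=0 ∧ m(v^o)=0. Then the restriction m' of m to V is a trap space of the perturbed network f^σ. -/
/-- A state `s` belongs to the subspace `m` (none = free/⋆). -/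
def inSub {V : Type*} (m : V → Option Bool) (s : V → Bool) : Prop :=
  ∀ v b, m v = some b → s v = b

/-- The synchronous update of a Boolean network. -/
def syncUpdate {V : Type*} (f : V → (V → Bool) → Bool) (s : V → Bool) : V → Bool :=
  fun v => f v s

/-- `m` is a trap space: `S[m]` is closed under the synchronous update. -/
def IsTrapSpace {V : Type*} (f : V → (V → Bool) → Bool) (m : V → Option Bool) : Prop :=
  ∀ s, inSub m s → inSub m (syncUpdate f s)

/-- Boolean expressions over a variable set `V`. -/
inductive BExpr (V : Type*) where
  | const : Bool → BExpr V
  | var : V → BExpr V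
  | not : BExpr V → BExpr V
  | and : BExpr V → BExpr V → BExpr V
  | or : BExpr V → BExpr V → BExpr V

/-- Two-valued evaluation of a Boolean expression at a state. -/
def BExpr.eval {V : Type*} : BExpr V → (V → Bool) → Bool
  | .const b, _ => b
  | .var v, s => s v
  | .not e, s => !(e.eval s)
  | .and e₁ e₂, s => e₁.eval s && e₂.eval s
  | .or e₁ e₂, s => e₁.eval s || e₂.eval s

/-- Minimum w.r.t. the total order 0 <_t ⋆ <_t 1 (⋆ = none). -/
def tmin : Option Bool → Option Bool → Option Bool
  | some false, _ => some false
  | _, some false => some false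
  | some true, y => y
  | x, some true => x
  | none, none => none

/-- Maximum w.r.t. the total order 0 <_t ⋆ <_t 1 (⋆ = none). -/
def tmax : Option Bool → Option Bool → Option Bool
  | some true, _ => some true
  | _, some true => some true
  | some false, y => y
  | x, some false => x
  | none, none => none

/-- Kleene three-valued evaluation of a Boolean expression under a subspace. -/
def BExpr.keval {V : Type*} : BExpr V → (V → Option Bool) → Option Bool
  | .const b, _ => some b
  | .var v, m => m v
  | .not e, m => (e.keval m).map (fun b => !b)
  | .and e₁ e₂, m => tmin (e₁.keval m) (e₂.keval m)
  | .or e₁ e₂, m => tmax (e₁.keval m) (e₂.keval m)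

/-- The partial order ≤_s on {0,1,⋆}: x ≤_s y iff x = y or y = ⋆. -/
def leS (x y : Option Bool) : Prop := x = y ∨ y = none

/-- Trap space via the three-valued characterization: m(f_v) ≤_s m(v) for all v. -/
def IsTrapK {V : Type*} (f : V → BExpr V) (m : V → Option Bool) : Prop :=
  ∀ v, leS ((f v).keval m) (m v)

/-- ≤_s-minimal trap space (three-valued characterization). -/
def IsMinTrapK {V : Type*} (f : V → BExpr V) (m : V → Option Bool) : Prop :=
  IsTrapK f m ∧ ∀ m', IsTrapK f m' → (∀ v, leS (m' v) (m v)) → m' = m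

/-- Renaming of variables in a Boolean expression. -/
def BExpr.map {V W : Type*} (φ : V → W) : BExpr V → BExpr W
  | .const b => .const b
  | .var v => .var (φ v)
  | .not e => .not (e.map φ)
  | .and e₁ e₂ => .and (e₁.map φ) (e₂.map φ)
  | .or e₁ e₂ => .or (e₁.map φ) (e₂.map φ)

/-- Variables of the perturbation-encoding network: original variables plus,
for each perturbable `v ∈ X`, variables `v^k = inr (v, true)` and `v^o = inr (v, false)`. -/
abbrev PVar (V : Type) (X : Finset V) := V ⊕ ({v : V // v ∈ X} × Bool)

/-- The perturbation-encoding network `g` of `f` w.r.t. perturbable set `X`: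
`g_{v^k} = v^k`, `g_{v^o} = v^o ∧ ¬v^k`, `g_v = ¬v^k ∧ (v^o ∨ f_v)` for `v ∈ X`,
and `g_u = f_u` otherwise. -/
def pertEnc {V : Type} [DecidableEq V] (f : V → BExpr V) (X : Finset V) :
    PVar V X → BExpr (PVar V X)
  | .inl v =>
      if h : v ∈ X then
        .and (.not (.var (.inr (⟨v, h⟩, true))))
          (.or (.var (.inr (⟨v, h⟩, false))) ((f v).map .inl))
      else (f v).map .inl
  | .inr (x, true) => .var (.inr (x, true))
  | .inr (x, false) => .and (.var (.inr (x, false))) (.not (.var (.inr (x, true))))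

/-- The perturbed network `f^σ`: perturbed variables get the constant `σ(v)`,
unperturbed ones (σ(v) = ⋆) keep `f_v`. -/
def pertNet {V : Type} [DecidableEq V] (f : V → BExpr V) (X : Finset V)
    (σ : {v : V // v ∈ X} → Option Bool) : V → BExpr V := fun v =>
  if h : v ∈ X then
    match σ ⟨v, h⟩ with
    | some b => .const b
    | none => f v
  else f v

/-- Decode the perturbation from the values of `v^k` and `v^o`:
σ(v) = 1 iff (k,o) = (0,1); σ(v) = 0 iff (k,o) = (1,0); σ(v) = ⋆ iff (k,o) = (0,0). -/
def decodePert (k o : Option Bool) : Option Bool :=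
  if k = some false ∧ o = some true then some true
  else if k = some true ∧ o = some false then some false
  else none


lemma keval_map {V W : Type*} (φ : V → W) (e : BExpr V) (m : W → Option Bool ) :
    (e.map φ).keval m = e.keval (fun v => m (φ v)) := by
  induction e <;> simp [BExpr.map, BExpr.keval, *]


lemma tmin_true (y : Option Bool) : tmin (some true) y = y := by
  rcases y with _ | _ | _ <;> rfl
lemma tmax_false (y : Option Bool) : tmax (some false) y = y := by
  rcases y with _ | _ | _ <;> rfl
lemma tmin_false (y : Option Bool) : tmin (some false) y = some false := by
  rcases y with _ | _ | _ <;> rfl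
lemma tmax_true (y : Option Bool) : tmax (some true) y = some true := by
  rcases y with _ | _ | _ <;> rfl

/-- Projection of trap spaces from the perturbed encoding: if `m` is a trap space
of `g` with all encoding variables fixed, then the restriction of `m` to `V`
is a trap space of the perturbed network `f^σ`, where `σ` is decoded from `m`. -/
theorem trap_space_projection {V : Type} [Fintype V] [DecidableEq V]
    (f : V → BExpr V) (X : Finset V) (m : PVar V X → Option Bool)
    (hm : IsTrapK (pertEnc f X) m)
    (hfix : ∀ (x : {v : V // v ∈ X}) (b : Bool), m (.inr (x, b)) ≠ none) :
    IsTrapK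
      (pertNet f X (fun x => decodePert (m (.inr (x, true))) (m (.inr (x, false)))))
      (fun v => m (.inl v)) := by
  intro v
  by_cases h : v ∈ X
  · obtain ⟨k, hk⟩ := Option.ne_none_iff_exists'.mp (hfix ⟨v, h⟩ true)
    obtain ⟨o, ho⟩ := Option.ne_none_iff_exists'.mp (hfix ⟨v, h⟩ false)
    have hv := hm (.inl v)
    have hvo := hm (.inr (⟨v, h⟩, false))
    simp only [pertEnc, dif_pos h, BExpr.keval, keval_map, hk, ho] at hv hvo
    simp only [pertNet, dif_pos h, decodePert, hk, ho]
    cases k <;> cases o <;> simp_all [tmin_true, tmax_false, tmin_false, tmax_true, BExpr.keval, leS, Option.map]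
  · have hv := hm (.inl v)
    simp only [pertEnc, dif_neg h, keval_map] at hv
    simpa [pertNet, dif_neg h] using hv
end

section
/- Lifting trap spaces to the perturbed encoding: given a perturbation σ : X → {0,1,⋆} and a trap space m of the perturbed network f^σ, the subspace m' on the variables of g defined by m'(v) = m(v) for v ∈ V, m'(v^k) = 1, m'(v^o) = 0 when σ(v) = 0; m'(v^k) = 0, m'(v^o) = 1 when σ(v) = 1; and m'(v^k) = 0, m'(v^o) = 0 when σ(v) = ⋆, is a trap space of the perturbation-encoding network g. -/
/-- The lifted subspace: `m` on the original variables, and on the encoding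
variables the values encoding the perturbation `σ`:
(k,o) = (1,0) if σ(v)=0, (0,1) if σ(v)=1, (0,0) if σ(v)=⋆. -/
def liftSub {V : Type} (X : Finset V) (σ : {v : V // v ∈ X} → Option Bool)
    (m : V → Option Bool) : PVar V X → Option Bool
  | .inl v => m v
  | .inr (x, true) => some (decide (σ x = some false))
  | .inr (x, false) => some (decide (σ x = some true))

/-- Lifting trap spaces to the perturbed encoding: if `m` is a trap space of the
perturbed network `f^σ`, then the lifted subspace is a trap space of `g`. -/
theorem trap_space_lifting {V : Type} [Fintype V] [DecidableEq V]
    (f : V → BExpr V) (X : Finset V) (σ : {v : V // v ∈ X} → Option Bool)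
    (m : V → Option Bool) (hm : IsTrapK (pertNet f X σ) m) :
    IsTrapK (pertEnc f X) (liftSub X σ m) := by
  have hmap : ∀ e : BExpr V, (e.map .inl).keval (liftSub X σ m) = e.keval m := by
    intro e
    induction e with
    | const b => rfl
    | var v => rfl
    | not e ih => simp [BExpr.map, BExpr.keval, ih]
    | and e₁ e₂ ih₁ ih₂ => simp [BExpr.map, BExpr.keval, ih₁, ih₂]
    | or e₁ e₂ ih₁ ih₂ => simp [BExpr.map, BExpr.keval, ih₁, ih₂]
  intro u
  match u with
  | .inr (x, true) => exact Or.inl rfl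
  | .inr (x, false) =>
      simp only [pertEnc, BExpr.keval, liftSub]
      rcases hσ : σ x with _ | b
      · simp [tmin, leS]
      · cases b <;> simp [tmin, leS]
  | .inl v =>
      by_cases h : v ∈ X
      · have hm' := hm v
        simp only [pertNet, dif_pos h] at hm'
        simp only [pertEnc, dif_pos h, BExpr.keval, liftSub, hmap]
        rcases hσ : σ ⟨v, h⟩ with _ | b
        · simp only [hσ] at hm'
          rcases hk : (f v).keval m with _ | c
          · simp only [hk] at hm'; simpa [tmin, tmax, hσ, hk] using hm'
          · cases c <;> simp only [hk] at hm' <;> simpa [tmin, tmax, hσ, hk] using hm'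
        · cases b <;> simp only [hσ, BExpr.keval] at hm' <;>
            simpa [tmin, tmax, hσ] using hm'
      · have hm' := hm v
        simp only [pertNet, dif_neg h] at hm'
        simpa [pertEnc, dif_neg h, hmap, liftSub] using hm'
end
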